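/- For every n ≥ 3, the isolate domination numbers of the path and cycle on n vertices satisfy γ_0(P_n) = γ_0(C_n) = ⌈n/3⌉. -/

import Mathlib

open Finset

/-- `S` is a dominating set of `G`: every vertex not in `S` is adjacent to a vertex of `S`. -/
def IsDominatingSet {V : Type*} (G : SimpleGraph V) (S : Finset V) : Prop :=
  ∀ v : V, v ∉ S → ∃ u ∈ S, G.Adj u v

/-- `S` is an isolate dominating set of `G`: a dominating set whose induced
subgraph has an isolated vertex. -/
def IsIsolateDominatingSet {V : Type*} (G : SimpleGraph V) (S : Finset V) : Prop :=
  IsDominatingSet G S ∧ ∃ v ∈ S, ∀ u ∈ S, ¬ G.Adj v u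

/-- `d(G, i)`: the number of dominating sets of `G` of cardinality `i`. -/
noncomputable def domCount {V : Type*} [Fintype V] (G : SimpleGraph V) (i : ℕ) : ℕ :=
  Set.ncard {S : Finset V | IsDominatingSet G S ∧ S.card = i}

/-- `d₀(G, i)`: the number of isolate dominating sets of `G` of cardinality `i`. -/
noncomputable def isoDomCount {V : Type*} [Fintype V] (G : SimpleGraph V) (i : ℕ) : ℕ :=
  Set.ncard {S : Finset V | IsIsolateDominatingSet G S ∧ S.card = i}

/-- `γ₀(G)`: the isolate domination number, the minimum cardinality of an
isolate dominating set of `G`. -/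
noncomputable def isoDomNumber {V : Type*} [Fintype V] (G : SimpleGraph V) : ℕ :=
  sInf {k : ℕ | ∃ S : Finset V, IsIsolateDominatingSet G S ∧ S.card = k}

/-- Auxiliary vertex function: the `k`-th vertex of the standard isolate dominating set. -/
def idsF (p k : ℕ) : Fin (p + 3) := ⟨min (3 * k + 1) (p + 2), by omega⟩

theorem isoDomNumber_path_cycle (n : ℕ) (hn : 3 ≤ n) :
    isoDomNumber (SimpleGraph.pathGraph n) = ⌈(n : ℚ) / 3⌉₊ ∧
    isoDomNumber (SimpleGraph.cycleGraph n) = ⌈(n : ℚ) / 3⌉₊ := by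
  obtain ⟨p, rfl⟩ : ∃ p, n = p + 3 := ⟨n - 3, by omega⟩
  set m := ⌈((p + 3 : ℕ) : ℚ) / 3⌉₊ with hmdef
  have hm1 : p + 3 ≤ 3 * m := by
    have h := Nat.le_ceil (((p + 3 : ℕ) : ℚ) / 3)
    rw [← hmdef, div_le_iff₀ (by norm_num)] at h
    push_cast at h
    have h2 : ((p + 3 : ℕ) : ℚ) ≤ ((3 * m : ℕ) : ℚ) := by push_cast; linarith
    exact_mod_cast h2
  have hm2 : ∀ k : ℕ, p + 3 ≤ 3 * k → m ≤ k := by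
    intro k hk
    rw [hmdef]
    apply Nat.ceil_le.mpr
    rw [div_le_iff₀ (by norm_num)]
    have h2 : ((p + 3 : ℕ) : ℚ) ≤ ((3 * k : ℕ) : ℚ) := by exact_mod_cast hk
    push_cast at h2 ⊢
    linarith
  have hm3 : 3 * m ≤ p + 5 := by
    have := hm2 ((p + 5) / 3) (by omega)
    omega
  -- adjacency in the cycle graph
  have hcyc : ∀ u v : Fin (p + 3),
      (SimpleGraph.cycleGraph (p + 3)).Adj u v → v = u + 1 ∨ v = u - 1 := by
    intro u v h
    rw [SimpleGraph.cycleGraph_adj] at h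
    rcases h with h | h
    · right
      rw [← h]; exact (sub_sub_cancel u v).symm
    · left
      rw [← h]; exact (add_sub_cancel u v).symm
  -- the standard isolate dominating set
  set S : Finset (Fin (p + 3)) := (Finset.range m).image (idsF p) with hSdef
  have hval : ∀ k, (idsF p k).val = min (3 * k + 1) (p + 2) := fun k => rfl
  have hcard : S.card = m := by
    rw [hSdef, Finset.card_image_of_injOn, Finset.card_range]
    intro a ha b hb hab
    rw [Finset.coe_range, Set.mem_Iio] at ha hb
    have h := congrArg Fin.val hab
    rw [hval, hval] at h
    omega
  have hx0S : idsF p 0 ∈ S := Finset.mem_image.mpr ⟨0, Finset.mem_range.mpr (by omega), rfl⟩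
  have hval0 : (idsF p 0).val = 1 := by rw [hval]; omega
  have hone1 : idsF p 0 = (1 : Fin (p + 3)) := Fin.ext (by rw [hval0, Fin.val_one])
  -- domination for the path
  have hdomP : IsDominatingSet (SimpleGraph.pathGraph (p + 3)) S := by
    intro v hv
    have hvlt := v.isLt
    have hkm : v.val / 3 < m := by omega
    refine ⟨idsF p (v.val / 3), Finset.mem_image.mpr ⟨_, Finset.mem_range.mpr hkm, rfl⟩, ?_⟩
    rw [SimpleGraph.pathGraph_adj]
    have hne : (idsF p (v.val / 3)).val ≠ v.val := by
      intro h
      exact hv (Finset.mem_image.mpr ⟨_, Finset.mem_range.mpr hkm, Fin.ext h⟩)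
    rw [hval] at hne ⊢
    omega
  -- the path is a subgraph of the cycle, so domination transfers
  have hpc : ∀ T : Finset (Fin (p + 3)), IsDominatingSet (SimpleGraph.pathGraph (p + 3)) T →
      IsDominatingSet (SimpleGraph.cycleGraph (p + 3)) T := by
    intro T hT v hv
    obtain ⟨u, hu, h⟩ := hT v hv
    exact ⟨u, hu, SimpleGraph.pathGraph_le_cycleGraph h⟩
  -- isolation in both graphs
  have hisoP : ∀ u ∈ S, ¬ (SimpleGraph.pathGraph (p + 3)).Adj (idsF p 0) u := by
    intro u hu hadj
    obtain ⟨k, hk, rfl⟩ := Finset.mem_image.mp hu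
    rw [Finset.mem_range] at hk
    rw [SimpleGraph.pathGraph_adj] at hadj
    rw [hval, hval] at hadj
    omega
  have hisoC : ∀ u ∈ S, ¬ (SimpleGraph.cycleGraph (p + 3)).Adj (idsF p 0) u := by
    intro u hu hadj
    obtain ⟨k, hk, rfl⟩ := Finset.mem_image.mp hu
    rw [Finset.mem_range] at hk
    rcases hcyc _ _ hadj with h | h
    · have h2 : (idsF p k).val = 2 := by
        rw [h, hone1, Fin.val_add, Fin.val_one]
        exact Nat.mod_eq_of_lt (by omega)
      rw [hval] at h2
      omega
    · have h2 : (idsF p k).val = 0 := by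
        rw [h, hone1, sub_self, Fin.val_zero]
      rw [hval] at h2
      omega
  -- lower bound for the cycle (hence for the path)
  have hlbC : ∀ T : Finset (Fin (p + 3)),
      IsDominatingSet (SimpleGraph.cycleGraph (p + 3)) T → m ≤ T.card := by
    intro T hT
    apply hm2
    have hcov : (Finset.univ : Finset (Fin (p + 3))) ⊆
        T.biUnion (fun u => {u - 1, u, u + 1}) := by
      intro v _
      rw [Finset.mem_biUnion]
      by_cases hv : v ∈ T
      · exact ⟨v, hv, by simp⟩
      · obtain ⟨u, hu, hadj⟩ := hT v hv
        rcases hcyc u v hadj with h | h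
        · exact ⟨u, hu, by simp [h]⟩
        · exact ⟨u, hu, by simp [h]⟩
    have h1 := Finset.card_le_card hcov
    have h2 : (T.biUnion (fun u => {u - 1, u, u + 1})).card ≤ 3 * T.card := by
      refine le_trans Finset.card_biUnion_le ?_
      refine le_trans (Finset.sum_le_sum (g := fun _ => 3) (fun u _ => ?_))
        (by rw [Finset.sum_const, smul_eq_mul]; omega)
      have ha := Finset.card_insert_le (u - 1) ({u, u + 1} : Finset (Fin (p + 3)))
      have hb := Finset.card_insert_le u ({u + 1} : Finset (Fin (p + 3)))
      have hc : ({u + 1} : Finset (Fin (p + 3))).card = 1 := Finset.card_singleton _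
      show ({u - 1, u, u + 1} : Finset (Fin (p + 3))).card ≤ 3
      omega
    rw [Finset.card_univ, Fintype.card_fin] at h1
    omega
  -- assemble
  have hA : ∀ (G : SimpleGraph (Fin (p + 3))),
      IsIsolateDominatingSet G S →
      (∀ T, IsDominatingSet G T → m ≤ T.card) →
      isoDomNumber G = m := by
    intro G hS hlb
    have hmem : m ∈ {k : ℕ | ∃ S : Finset (Fin (p + 3)),
        IsIsolateDominatingSet G S ∧ S.card = k} := ⟨S, hS, hcard⟩
    rw [isoDomNumber]
    apply le_antisymm (Nat.sInf_le hmem)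
    apply le_csInf ⟨m, hmem⟩
    rintro k ⟨T, hT, rfl⟩
    exact hlb T hT.1
  exact ⟨hA _ ⟨hdomP, idsF p 0, hx0S, hisoP⟩ (fun T hT => hlbC T (hpc T hT)),
    hA _ ⟨hpc S hdomP, idsF p 0, hx0S, hisoC⟩ hlbC⟩
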